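/- Let γ > 0 and let i, j > 0 be real numbers. Then the functions f₁(k) := γ^k·(i−k)^{i−k}·(j−k)^{j−k} and f₂(k) := k^k·γ^k·(i−k)^{i−k}·(j−k)^{j−k} are convex on the open interval (0, min{i, j}). -/

import Mathlib

open Set Real

lemma expComp {s : Set ℝ} {g : ℝ → ℝ} (hg : ConvexOn ℝ s g) :
    ConvexOn ℝ s (fun x => Real.exp (g x)) := by
  refine ⟨hg.1, fun x hx y hy a b ha hb hab => ?_⟩
  calc Real.exp (g (a • x + b • y)) ≤ Real.exp (a • g x + b • g y) :=
        Real.exp_le_exp.2 (hg.2 hx hy ha hb hab)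
    _ ≤ a • Real.exp (g x) + b • Real.exp (g y) :=
        convexOn_exp.2 (mem_univ _) (mem_univ _) ha hb hab

lemma subConvex (c : ℝ) {s : Set ℝ} (hs : Convex ℝ s) (hsub : ∀ x ∈ s, 0 ≤ c - x) :
    ConvexOn ℝ s (fun k => (c - k) * Real.log (c - k)) := by
  have h := (Real.convexOn_mul_log.comp_affineMap
    (AffineMap.lineMap (c : ℝ) (c - 1))).subset (fun x hx => ?_) hs
  · refine h.congr (fun k _ => ?_)
    simp [AffineMap.lineMap_apply]
    ring_nf
  · simp only [mem_preimage, AffineMap.lineMap_apply, mem_Ici, vsub_eq_sub, vadd_eq_add,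
      smul_eq_mul]
    have := hsub x hx
    nlinarith [hsub x hx]

lemma linConvex (c : ℝ) {s : Set ℝ} (hs : Convex ℝ s) :
    ConvexOn ℝ s (fun k : ℝ => k * c) :=
  (LinearMap.toSpanSingleton ℝ ℝ c).convexOn hs

/-- Convexity of `k ↦ γᵏ(i-k)^{i-k}(j-k)^{j-k}` and
`k ↦ kᵏγᵏ(i-k)^{i-k}(j-k)^{j-k}` on `(0, min{i,j})`, where `t^s` denotes
the real power `exp(s·log t)`. -/
theorem stmt_15 (γ i j : ℝ) (hγ : 0 < γ) (hi : 0 < i) (hj : 0 < j) :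
    ConvexOn ℝ (Ioo (0:ℝ) (min i j))
      (fun k : ℝ => γ ^ k * (i - k) ^ (i - k) * (j - k) ^ (j - k)) ∧
    ConvexOn ℝ (Ioo (0:ℝ) (min i j))
      (fun k : ℝ => k ^ k * γ ^ k * (i - k) ^ (i - k) * (j - k) ^ (j - k)) := by
  set s : Set ℝ := Ioo (0:ℝ) (min i j) with hs
  have hconv : Convex ℝ s := convex_Ioo _ _
  have hik : ∀ x ∈ s, 0 ≤ i - x := fun x hx => by
    have := hx.2; have := lt_of_lt_of_le this (min_le_left i j); linarith
  have hjk : ∀ x ∈ s, 0 ≤ j - x := fun x hx => by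
    have := hx.2; have := lt_of_lt_of_le this (min_le_right i j); linarith
  have hg1 : ConvexOn ℝ s (fun k =>
      k * Real.log γ + ((i - k) * Real.log (i - k) + (j - k) * Real.log (j - k))) :=
    (linConvex _ hconv).add ((subConvex i hconv hik).add (subConvex j hconv hjk))
  have hg2 : ConvexOn ℝ s (fun k => k * Real.log k +
      (k * Real.log γ + ((i - k) * Real.log (i - k) + (j - k) * Real.log (j - k)))) :=
    (Real.convexOn_mul_log.subset (fun x hx => le_of_lt hx.1) hconv).add hg1
  have key : ∀ k ∈ s,
      γ ^ k * (i - k) ^ (i - k) * (j - k) ^ (j - k) =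
      Real.exp (k * Real.log γ + ((i - k) * Real.log (i - k) + (j - k) * Real.log (j - k))) := by
    intro k hk
    have h1 : (0:ℝ) < i - k := lt_of_lt_of_le (by linarith [hk.2, min_le_left i j]) (le_refl _)
    have h1 : (0:ℝ) < i - k := by have := hk.2; have := lt_of_lt_of_le this (min_le_left i j); linarith
    have h2 : (0:ℝ) < j - k := by have := hk.2; have := lt_of_lt_of_le this (min_le_right i j); linarith
    rw [Real.rpow_def_of_pos hγ, Real.rpow_def_of_pos h1, Real.rpow_def_of_pos h2,
      ← Real.exp_add, ← Real.exp_add]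
    ring_nf
  constructor
  · exact (expComp hg1).congr (fun k hk => (key k hk).symm)
  · refine (expComp hg2).congr (fun k hk => ?_)
    have hk0 : (0:ℝ) < k := hk.1
    beta_reduce
    rw [Real.exp_add, ← key k hk, Real.rpow_def_of_pos hk0]
    ring
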